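/- Let n ≥ 2 be a natural number, σ > 0, m ≥ 1 a natural number, V > 0 a real number, and let ω_n denote the Lebesgue volume of the unit ball in ℝⁿ. Let ψ₁, ψ₂ : ℝ → ℝ be differentiable on a neighborhood of θ_* > 0 with ψ₁′, ψ₂′ differentiable at θ_*, and assume j(θ) := ψ₂(θ) − ψ₁(θ) > 0 on that neighborhood. Define R(θ) := (n−1)σ/j(θ), V₁(θ) := m·ω_n·R(θ)ⁿ, |Γ|(θ) := m·n·ω_n·R(θ)^{n−1}, and φ(θ) := ε₁(θ)·V₁(θ) + ε₂(θ)·(V − V₁(θ)) + σ·|Γ|(θ). Assume moreover κ₁(θ_*) > 0, κ₂(θ_*) > 0, and 0 < V₁(θ_*) < V, and set R_* := R(θ_*), |Γ_*| := |Γ|(θ_*), l_* := l(θ_*), and K := κ₁(θ_*)·V₁(θ_*) + κ₂(θ_*)·(V − V₁(θ_*)). Then φ′(θ_*) ≤ 0 if and only if the stability condition (S) holds, i.e. if and only if σ(n−1)/R_*² − l_*²·|Γ_*|/(θ_*·K) ≤ 0. -/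

import Mathlib

open MeasureTheory

set_option maxHeartbeats 1000000

/-- Part (ii) of the linear stability theorem: `φ′(θ_*) ≤ 0` iff the stability
condition (S) holds, i.e. `σ(n−1)/R_*² − l_*²|Γ_*|/(θ_*·K) ≤ 0`. -/
theorem stability_condition_iff_energy_derivative_nonpos
    (n : ℕ) (hn : 2 ≤ n) (σ : ℝ) (hσ : 0 < σ)
    (m : ℕ) (hm : 1 ≤ m) (V : ℝ) (hV : 0 < V)
    (θstar : ℝ) (hθ : 0 < θstar)
    (ψ₁ ψ₂ ψ₁' ψ₂' : ℝ → ℝ)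
    (U : Set ℝ) (hU : U ∈ nhds θstar)
    (hψ₁ : ∀ θ ∈ U, HasDerivAt ψ₁ (ψ₁' θ) θ)
    (hψ₂ : ∀ θ ∈ U, HasDerivAt ψ₂ (ψ₂' θ) θ)
    (ψ₁'' ψ₂'' : ℝ)
    (hψ₁'' : HasDerivAt ψ₁' ψ₁'' θstar)
    (hψ₂'' : HasDerivAt ψ₂' ψ₂'' θstar)
    (hj : ∀ θ ∈ U, 0 < ψ₂ θ - ψ₁ θ)
    (ωn : ℝ)
    (hωn : ωn = (volume (Metric.ball (0 : EuclideanSpace ℝ (Fin n)) 1)).toReal)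
    (R V₁ Γ ε₁ ε₂ φ : ℝ → ℝ)
    (hR : ∀ θ, R θ = (n - 1 : ℝ) * σ / (ψ₂ θ - ψ₁ θ))
    (hV₁ : ∀ θ, V₁ θ = m * ωn * (R θ) ^ n)
    (hΓ : ∀ θ, Γ θ = m * n * ωn * (R θ) ^ (n - 1))
    (hε₁ : ∀ θ, ε₁ θ = ψ₁ θ - θ * ψ₁' θ)
    (hε₂ : ∀ θ, ε₂ θ = ψ₂ θ - θ * ψ₂' θ)
    (hφ : ∀ θ, φ θ = ε₁ θ * V₁ θ + ε₂ θ * (V - V₁ θ) + σ * Γ θ)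
    (κ₁ κ₂ l : ℝ)
    (hκ₁ : κ₁ = -θstar * ψ₁'') (hκ₂ : κ₂ = -θstar * ψ₂'')
    (hl : l = θstar * (ψ₂' θstar - ψ₁' θstar))
    (hκ₁pos : 0 < κ₁) (hκ₂pos : 0 < κ₂)
    (hV₁pos : 0 < V₁ θstar) (hV₁lt : V₁ θstar < V)
    (K : ℝ) (hK : K = κ₁ * V₁ θstar + κ₂ * (V - V₁ θstar)) :
    deriv φ θstar ≤ 0 ↔
      σ * (n - 1 : ℝ) / (R θstar) ^ 2 - l ^ 2 * Γ θstar / (θstar * K) ≤ 0 := by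
  have hmem : θstar ∈ U := mem_of_mem_nhds hU
  have h1 : HasDerivAt ψ₁ (ψ₁' θstar) θstar := hψ₁ _ hmem
  have h2 : HasDerivAt ψ₂ (ψ₂' θstar) θstar := hψ₂ _ hmem
  set c : ℝ := ((n : ℝ) - 1) * σ with hc
  have hn1 : (1 : ℝ) ≤ (n : ℝ) - 1 := by
    have : (2 : ℝ) ≤ (n : ℝ) := by exact_mod_cast hn
    linarith
  have hcpos : 0 < c := by
    have : (0:ℝ) < (n:ℝ) - 1 := by linarith
    exact mul_pos this hσ
  have hjpos : 0 < ψ₂ θstar - ψ₁ θstar := hj _ hmem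
  have hjne : ψ₂ θstar - ψ₁ θstar ≠ 0 := hjpos.ne'
  set j' : ℝ := ψ₂' θstar - ψ₁' θstar with hj'
  have hjd : HasDerivAt (fun θ => ψ₂ θ - ψ₁ θ) j' θstar := h2.sub h1
  have hRfun : R = fun θ => c / (ψ₂ θ - ψ₁ θ) := funext hR
  set R' : ℝ := -(c * j') / (ψ₂ θstar - ψ₁ θstar) ^ 2 with hR'def
  have hRd : HasDerivAt R R' θstar := by
    rw [hRfun]
    have h := (hasDerivAt_const θstar c).div hjd hjne
    refine h.congr_deriv ?_
    rw [hR'def]; ring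
  have hRval : R θstar = c / (ψ₂ θstar - ψ₁ θstar) := hR θstar
  have hRpos : 0 < R θstar := by rw [hRval]; exact div_pos hcpos hjpos
  have hRne : R θstar ≠ 0 := hRpos.ne'
  -- derivative of V₁ and Γ
  have hV₁fun : V₁ = fun θ => (m : ℝ) * ωn * R θ ^ n := funext hV₁
  have hV₁d : HasDerivAt V₁ ((m : ℝ) * ωn * ((n : ℝ) * R θstar ^ (n - 1) * R')) θstar := by
    rw [hV₁fun]; exact (hRd.pow n).const_mul _
  have hΓfun : Γ = fun θ => (m : ℝ) * (n : ℝ) * ωn * R θ ^ (n - 1) := funext hΓ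
  have hΓd : HasDerivAt Γ
      ((m : ℝ) * (n : ℝ) * ωn * (((n - 1 : ℕ) : ℝ) * R θstar ^ (n - 1 - 1) * R')) θstar := by
    rw [hΓfun]; exact (hRd.pow (n - 1)).const_mul _
  -- derivatives of internal energies
  have hε₁fun : ε₁ = fun θ => ψ₁ θ - θ * ψ₁' θ := funext hε₁
  have hε₂fun : ε₂ = fun θ => ψ₂ θ - θ * ψ₂' θ := funext hε₂
  have hε₁d : HasDerivAt ε₁ (ψ₁' θstar - (1 * ψ₁' θstar + θstar * ψ₁'')) θstar := by
    rw [hε₁fun]; exact h1.sub ((hasDerivAt_id θstar).mul hψ₁'')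
  have hε₂d : HasDerivAt ε₂ (ψ₂' θstar - (1 * ψ₂' θstar + θstar * ψ₂'')) θstar := by
    rw [hε₂fun]; exact h2.sub ((hasDerivAt_id θstar).mul hψ₂'')
  -- derivative of φ
  have hφfun : φ = fun θ => ε₁ θ * V₁ θ + ε₂ θ * (V - V₁ θ) + σ * Γ θ := funext hφ
  set D : ℝ :=
    ((ψ₁' θstar - (1 * ψ₁' θstar + θstar * ψ₁'')) * V₁ θstar
        + ε₁ θstar * ((m : ℝ) * ωn * ((n : ℝ) * R θstar ^ (n - 1) * R'))
      + ((ψ₂' θstar - (1 * ψ₂' θstar + θstar * ψ₂'')) * (V - V₁ θstar)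
        + ε₂ θstar * (0 - (m : ℝ) * ωn * ((n : ℝ) * R θstar ^ (n - 1) * R'))))
      + σ * ((m : ℝ) * (n : ℝ) * ωn * (((n - 1 : ℕ) : ℝ) * R θstar ^ (n - 1 - 1) * R')) with hD
  have hφd : HasDerivAt φ D θstar := by
    rw [hφfun]
    exact ((hε₁d.mul hV₁d).add
      (hε₂d.mul ((hasDerivAt_const θstar V).sub hV₁d))).add (hΓd.const_mul σ)
  -- positivity facts
  have hωpos : 0 < ωn := by
    have hxn : 0 < R θstar ^ n := pow_pos hRpos n
    have h := hV₁pos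
    rw [hV₁] at h
    by_contra hcon
    push_neg at hcon
    have hm' : (0:ℝ) < (m:ℝ) := by exact_mod_cast Nat.lt_of_lt_of_le Nat.zero_lt_one hm
    nlinarith [mul_nonpos_of_nonneg_of_nonpos (le_of_lt (mul_pos hm' hxn)) hcon]
  have hΓpos : 0 < Γ θstar := by
    rw [hΓ]
    have hm' : (0:ℝ) < (m:ℝ) := by exact_mod_cast Nat.lt_of_lt_of_le Nat.zero_lt_one hm
    have hn' : (0:ℝ) < (n:ℝ) := by positivity
    exact mul_pos (mul_pos (mul_pos hm' hn') hωpos) (pow_pos hRpos _)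
  have hKpos : 0 < K := by
    rw [hK]
    have := mul_pos hκ₁pos hV₁pos
    have := mul_pos hκ₂pos (by linarith : (0:ℝ) < V - V₁ θstar)
    linarith
  -- cast arithmetic
  have hcast : ((n - 1 : ℕ) : ℝ) = (n : ℝ) - 1 := by
    rw [Nat.cast_sub (by omega)]; simp
  have hpow1 : R θstar ^ (n - 1) = R θstar ^ n / R θstar := by
    rw [eq_div_iff hRne, ← pow_succ]
    congr 1; omega
  have hpow2 : R θstar ^ (n - 1 - 1) = R θstar ^ n / R θstar ^ 2 := by
    rw [eq_div_iff (pow_ne_zero 2 hRne), ← pow_add]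
    congr 1; omega
  -- express ψ₂ via R
  have hψ₂val : ψ₂ θstar = ψ₁ θstar + c / R θstar := by
    rw [hRval]; field_simp; ring
  -- the key closed form for the derivative
  have hDeq : D = K - l ^ 2 * Γ θstar * R θstar ^ 2 / (θstar * c) := by
    rw [hD, hK, hκ₁, hκ₂, hl, hV₁ θstar, hΓ θstar, hε₁, hε₂, hR'def, hpow1, hpow2, hcast,
      hψ₂val, hRval]
    have hcne : c ≠ 0 := hcpos.ne'
    have e1 : c / (c / (ψ₂ θstar - ψ₁ θstar)) = ψ₂ θstar - ψ₁ θstar := by field_simp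
    have e2 : ψ₁ θstar + (ψ₂ θstar - ψ₁ θstar) - ψ₁ θstar = ψ₂ θstar - ψ₁ θstar := by ring
    rw [e1, e2]
    field_simp
    ring
  rw [hφd.deriv, hDeq]
  have hθc : 0 < θstar * c := mul_pos hθ hcpos
  have hR2 : 0 < R θstar ^ 2 := pow_pos hRpos 2
  have hθK : 0 < θstar * K := mul_pos hθ hKpos
  rw [sub_nonpos, sub_nonpos, le_div_iff₀ hθc, div_le_div_iff₀ hR2 hθK]
  constructor <;> intro h <;> nlinarith [h]
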